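/- Let k ≥ 3 and ℓ ≥ 0, let G be a finite simple (P3+ℓP1)-free graph, and let S be a maximum independent set of G with |S| ≥ (k−1)²·(ℓ+3). Let A be the set of vertices outside S having exactly one neighbor in S, and let b be a vertex outside S having at least two neighbors in S. Then for every subset I ⊆ A with |I| = ℓ, the vertex b has at least two neighbors in S that have no neighbor in I. -/

import Mathlib

open SimpleGraph

/-- The graph `P₃ + ℓP₁`: disjoint union of a path on 3 vertices and `ℓ` isolated vertices. -/
def P3PlusP1 (ℓ : ℕ) : SimpleGraph (Fin 3 ⊕ Fin ℓ) :=
  pathGraph 3 ⊕g (⊥ : SimpleGraph (Fin ℓ))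

/-- `G` is `H`-free: no induced subgraph of `G` is isomorphic to `H`. -/
def HFree {W V : Type*} (H : SimpleGraph W) (G : SimpleGraph V) : Prop :=
  IsEmpty (H ↪g G)

/-- `S` is an independent (stable) set of `G`. -/
def IndepSet {V : Type*} (G : SimpleGraph V) (S : Set V) : Prop :=
  S.Pairwise (fun a b => ¬ G.Adj a b)

theorem stmt8 (k ℓ : ℕ) (hk : 3 ≤ k) (V : Type*) [Fintype V] (G : SimpleGraph V)
    (hfree : HFree (P3PlusP1 ℓ) G)
    (S : Set V) (hS : IndepSet G S) (hmax : ∀ T : Set V, IndepSet G T → T.ncard ≤ S.ncard)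
    (hScard : (k - 1) ^ 2 * (ℓ + 3) ≤ S.ncard)
    (b : V) (hb : b ∉ S) (hnbrs : 2 ≤ {s ∈ S | G.Adj b s}.ncard)
    (I : Set V) (hIA : I ⊆ {v : V | v ∉ S ∧ {s ∈ S | G.Adj v s}.ncard = 1})
    (hIcard : I.ncard = ℓ) :
    2 ≤ {s ∈ S | G.Adj b s ∧ ∀ a ∈ I, ¬ G.Adj s a}.ncard := by
  classical
  set N : Set V := {s ∈ S | G.Adj b s} with hN
  set Good : Set V := {s ∈ S | G.Adj b s ∧ ∀ a ∈ I, ¬ G.Adj s a} with hGood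
  set Bad : Set V := {s ∈ S | G.Adj b s ∧ ∃ a ∈ I, G.Adj s a} with hBad
  by_cases hbig : ℓ + 2 ≤ N.ncard
  · -- enough neighbors: at most ℓ of them are "bad"
    have hsub : N ⊆ Good ∪ Bad := by
      intro s hs
      by_cases h : ∀ a ∈ I, ¬ G.Adj s a
      · exact Or.inl ⟨hs.1, hs.2, h⟩
      · push_neg at h
        exact Or.inr ⟨hs.1, hs.2, h⟩
    -- an injection from Bad into I
    have hBadcard : Bad.ncard ≤ ℓ := by
      choose φ hφI hφadj using fun (s : V) (hs : s ∈ Bad) => hs.2.2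
      rw [← hIcard]
      apply Set.ncard_le_ncard_of_injOn (fun s => if hs : s ∈ Bad then φ s hs else b)
      · intro s hs
        simp only [hs, dif_pos]
        exact hφI s hs
      · intro s1 h1 s2 h2 he
        simp only [h1, h2, dif_pos] at he
        have hu : {t ∈ S | G.Adj (φ s1 h1) t}.ncard = 1 := (hIA (hφI s1 h1)).2
        obtain ⟨x, hx⟩ := Set.ncard_eq_one.mp hu
        have m1 : s1 ∈ {t ∈ S | G.Adj (φ s1 h1) t} := ⟨h1.1, (hφadj s1 h1).symm⟩
        have m2 : s2 ∈ {t ∈ S | G.Adj (φ s1 h1) t} := by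
          rw [he]; exact ⟨h2.1, (hφadj s2 h2).symm⟩
        rw [hx] at m1 m2
        rw [m1, m2]
    have := Set.ncard_union_le Good Bad
    have hle : N.ncard ≤ Good.ncard + Bad.ncard :=
      le_trans (Set.ncard_le_ncard hsub (Set.toFinite _)) this
    omega
  · -- few neighbors: build an induced P3 + ℓP1, contradiction
    exfalso
    push_neg at hbig
    obtain ⟨s1, s2, hs1, hs2, hne⟩ := (Set.one_lt_ncard_iff (Set.toFinite _)).mp (by omega : 1 < N.ncard)
    have hNS : N ⊆ S := fun x hx => hx.1
    have hW : ℓ ≤ (S \ N).ncard := by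
      have hd := Set.ncard_diff hNS (Set.toFinite _)
      have h4 : 4 ≤ (k - 1) ^ 2 := by
        have : 2 ≤ k - 1 := by omega
        nlinarith
      have : 4 * (ℓ + 3) ≤ S.ncard := le_trans (by nlinarith) hScard
      omega
    -- pick ℓ distinct vertices in S \ N
    obtain ⟨F, hFsub, hFcard⟩ := Finset.exists_subset_card_eq
      (by rwa [Set.ncard_eq_toFinset_card'] at hW : ℓ ≤ (S \ N).toFinset.card)
    have e := F.equivFinOfCardEq hFcard
    set g : Fin ℓ → V := fun i => (e.symm i : V) with hg
    have hgW : ∀ i, g i ∈ S \ N := fun i => by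
      have := hFsub (e.symm i).2
      rwa [Set.mem_toFinset] at this
    have hginj : Function.Injective g := fun i j h => by
      have : e.symm i = e.symm j := Subtype.ext h
      simpa using congrArg e this
    -- basic adjacency facts
    have hbs1 : G.Adj b s1 := hs1.2
    have hbs2 : G.Adj b s2 := hs2.2
    have hindep : ∀ x ∈ S, ∀ y ∈ S, ¬ G.Adj x y := by
      intro x hx y hy hadj
      rcases eq_or_ne x y with rfl | hxy
      · exact G.loopless.irrefl x hadj
      · exact hS hx hy hxy hadj
    have hgS : ∀ i, g i ∈ S := fun i => (hgW i).1
    have hgb : ∀ i, ¬ G.Adj b (g i) := fun i h => (hgW i).2 ⟨hgS i, h⟩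
    set f : Fin 3 ⊕ Fin ℓ → V := Sum.elim (![s1, b, s2]) g with hf
    have finj : Function.Injective f := by
      have hs1b : s1 ≠ b := fun h => by exact G.loopless.irrefl b (h ▸ hbs1).symm
      have hs2b : s2 ≠ b := fun h => by exact G.loopless.irrefl b (h ▸ hbs2).symm
      have hgns1 : ∀ i, g i ≠ s1 := fun i h => (hgW i).2 (h ▸ hs1)
      have hgns2 : ∀ i, g i ≠ s2 := fun i h => (hgW i).2 (h ▸ hs2)
      have hgnb : ∀ i, g i ≠ b := fun i h => hb (h ▸ hgS i)
      rintro (x | x) (y | y) hxy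
      · simp only [hf, Sum.elim_inl] at hxy
        fin_cases x <;> fin_cases y <;> simp_all <;> exact absurd hxy.symm (by assumption)
      · exfalso; simp only [hf, Sum.elim_inl, Sum.elim_inr] at hxy
        fin_cases x
        · exact hgns1 y hxy.symm
        · exact hgnb y hxy.symm
        · exact hgns2 y hxy.symm
      · exfalso; simp only [hf, Sum.elim_inl, Sum.elim_inr] at hxy
        fin_cases y
        · exact hgns1 x hxy
        · exact hgnb x hxy
        · exact hgns2 x hxy
      · simp only [hf, Sum.elim_inr] at hxy
        exact congrArg Sum.inr (hginj hxy)
    have hrel : ∀ x y : Fin 3 ⊕ Fin ℓ, G.Adj (f x) (f y) ↔ (P3PlusP1 ℓ).Adj x y := by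
      have hs1s2 : ¬ G.Adj s1 s2 := hindep s1 hs1.1 s2 hs2.1
      rintro (x | x) (y | y)
      · simp only [hf, Sum.elim_inl, P3PlusP1, SimpleGraph.sum_adj, pathGraph_adj]
        fin_cases x <;> fin_cases y <;>
          simp_all [G.adj_comm, G.loopless] <;> omega
      · simp only [hf, Sum.elim_inl, Sum.elim_inr, P3PlusP1, SimpleGraph.sum_adj]
        fin_cases x <;>
          simp only [Matrix.cons_val_zero, Matrix.cons_val_one, Matrix.head_cons,
            Matrix.cons_val_two, Matrix.tail_cons, iff_false]
        · exact hindep s1 hs1.1 _ (hgS y)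
        · exact hgb y
        · exact hindep s2 hs2.1 _ (hgS y)
      · simp only [hf, Sum.elim_inl, Sum.elim_inr, P3PlusP1, SimpleGraph.sum_adj]
        fin_cases y <;>
          simp only [Matrix.cons_val_zero, Matrix.cons_val_one, Matrix.head_cons,
            Matrix.cons_val_two, Matrix.tail_cons, iff_false]
        · exact fun h => hindep s1 hs1.1 _ (hgS x) h.symm
        · exact fun h => hgb x h.symm
        · exact fun h => hindep s2 hs2.1 _ (hgS x) h.symm
      · simp only [hf, Sum.elim_inr, P3PlusP1, SimpleGraph.sum_adj, bot_adj, iff_false]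
        exact hindep _ (hgS x) _ (hgS y)
    exact hfree.false ⟨⟨f, finj⟩, fun {x y} => hrel x y⟩
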